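/- For P(D) = D² + β² with β > 0 and 0 < a < δ, let t₀ ∈ (0,a) satisfy 2·sin(βt₀) = sin(βa). Then the extremal function h̃(t) = (1/β²)[-cos β(a-t) + 2cos β(t₀-t) - 1] on [0,t₀] and h̃(t) = (1/β²)[1 - cos β(a-t)] on (t₀,a] is decreasing on [0,a], and β²·h̃(0) ≤ 1. -/
import Mathlib

open Real

lemma key_trig (u c u₀ : ℝ) (hu : 0 ≤ u) (huu : u ≤ u₀) (hc : 0 ≤ c)
    (hlt : u₀ + c < π / 2) (heq : 2 * Real.sin u₀ = Real.sin (u₀ + c)) :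
    2 * Real.sin u ≤ Real.sin (u + c) := by
  have hpi := Real.pi_pos
  have hC₀ : 0 < Real.cos u₀ :=
    Real.cos_pos_of_mem_Ioo ⟨by linarith, by linarith⟩
  have hC : 0 ≤ Real.cos u :=
    le_of_lt (Real.cos_pos_of_mem_Ioo ⟨by linarith, by linarith⟩)
  have hsc : 0 ≤ Real.sin c := Real.sin_nonneg_of_nonneg_of_le_pi hc (by linarith)
  have hcc : Real.cos c ≤ 1 := Real.cos_le_one c
  have hS : 0 ≤ Real.sin u := Real.sin_nonneg_of_nonneg_of_le_pi hu (by linarith)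
  have h1 : Real.sin u * Real.cos u₀ ≤ Real.sin u₀ * Real.cos u := by
    have := Real.sin_nonneg_of_nonneg_of_le_pi (by linarith : 0 ≤ u₀ - u) (by linarith)
    rw [Real.sin_sub] at this
    linarith
  rw [Real.sin_add] at heq ⊢
  have h2 : Real.sin u₀ * (2 - Real.cos c) = Real.cos u₀ * Real.sin c := by
    linear_combination heq
  have h3 := mul_le_mul_of_nonneg_right h1 (by linarith : (0:ℝ) ≤ 2 - Real.cos c)
  have h4 : Real.sin u * Real.cos u₀ * (2 - Real.cos c)
      ≤ Real.cos u * (Real.cos u₀ * Real.sin c) := by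
    calc Real.sin u * Real.cos u₀ * (2 - Real.cos c)
        ≤ Real.sin u₀ * Real.cos u * (2 - Real.cos c) := h3
      _ = Real.cos u * (Real.cos u₀ * Real.sin c) := by linear_combination Real.cos u * h2
  nlinarith [h4, hC₀]

lemma hasDerivAt_coscomp (β a : ℝ) (t : ℝ) :
    HasDerivAt (fun t => Real.cos (β * (a - t))) (β * Real.sin (β * (a - t))) t := by
  have h1 : HasDerivAt (fun t : ℝ => β * (a - t)) (-β) t := by
    simpa using ((hasDerivAt_id t).const_sub a).const_mul β
  have := h1.cos
  convert this using 1
  ring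

/-- For `P(D) = D² + β²` with `β > 0`, `0 < a < δ = π/(2β)` and `t₀ ∈ (0,a)` with
`2·sin(βt₀) = sin(βa)`, the extremal function
`h̃(t) = (1/β²)[-cos β(a-t) + 2cos β(t₀-t) - 1]` on `[0,t₀]`,
`h̃(t) = (1/β²)[1 - cos β(a-t)]` on `(t₀,a]`, is decreasing on `[0,a]`, and
`β²·h̃(0) ≤ 1`. -/
theorem stmt_13 (β a t₀ : ℝ) (hβ : 0 < β) (ha : 0 < a)
    (haδ : a < Real.pi / (2 * β)) (ht₀ : t₀ ∈ Set.Ioo 0 a)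
    (hsin : 2 * Real.sin (β * t₀) = Real.sin (β * a))
    (htil : ℝ → ℝ)
    (hh : ∀ t, htil t =
      if t ≤ t₀ then
        (-Real.cos (β * (a - t)) + 2 * Real.cos (β * (t₀ - t)) - 1) / β ^ 2
      else (1 - Real.cos (β * (a - t))) / β ^ 2) :
    AntitoneOn htil (Set.Icc 0 a) ∧ β ^ 2 * htil 0 ≤ 1 := by
  obtain ⟨ht₀0, ht₀a⟩ := ht₀
  have hpi := Real.pi_pos
  have hba : β * a < π / 2 := by
    have h := (lt_div_iff₀ (by positivity : (0:ℝ) < 2 * β)).mp haδ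
    nlinarith
  have hβ2 : (0:ℝ) < β ^ 2 := by positivity
  set F : ℝ → ℝ := fun t => -Real.cos (β * (a - t)) + 2 * Real.cos (β * (t₀ - t)) - 1
    with hF
  set G : ℝ → ℝ := fun t => 1 - Real.cos (β * (a - t)) with hG
  have hFd : ∀ t : ℝ, HasDerivAt F
      (-(β * Real.sin (β * (a - t))) + 2 * (β * Real.sin (β * (t₀ - t)))) t := by
    intro t
    exact ((hasDerivAt_coscomp β a t).neg.add
      ((hasDerivAt_coscomp β t₀ t).const_mul 2)).sub_const 1
  have hGd : ∀ t : ℝ, HasDerivAt G (-(β * Real.sin (β * (a - t)))) t := by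
    intro t
    simpa using (hasDerivAt_coscomp β a t).const_sub 1
  -- antitone of F on [0, t₀]
  have hAF : AntitoneOn F (Set.Icc 0 t₀) := by
    apply AntitoneOn.mono (s := Set.Icc 0 t₀)
      (antitoneOn_of_deriv_nonpos (convex_Icc 0 t₀)
        (fun t _ => (hFd t).continuousAt.continuousWithinAt)
        (fun t _ => (hFd t).differentiableAt.differentiableWithinAt) ?_) le_rfl
    intro t ht
    rw [interior_Icc] at ht
    rw [(hFd t).deriv]
    have hkey : 2 * Real.sin (β * (t₀ - t)) ≤ Real.sin (β * (t₀ - t) + β * (a - t₀)) := by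
      apply key_trig _ _ (β * t₀)
      · nlinarith [ht.1, ht.2]
      · nlinarith [ht.1]
      · nlinarith
      · nlinarith
      · have : β * t₀ + β * (a - t₀) = β * a := by ring
        rw [this]; exact hsin
    have h2 : β * (t₀ - t) + β * (a - t₀) = β * (a - t) := by ring
    rw [h2] at hkey
    nlinarith [hkey]
  -- antitone of G on [t₀, a]
  have hAG : AntitoneOn G (Set.Icc t₀ a) := by
    apply antitoneOn_of_deriv_nonpos (convex_Icc t₀ a)
      (fun t _ => (hGd t).continuousAt.continuousWithinAt)
      (fun t _ => (hGd t).differentiableAt.differentiableWithinAt)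
    intro t ht
    rw [interior_Icc] at ht
    rw [(hGd t).deriv]
    have : 0 ≤ Real.sin (β * (a - t)) := by
      apply Real.sin_nonneg_of_nonneg_of_le_pi
      · nlinarith [ht.2]
      · nlinarith [ht.1]
    nlinarith
  have hFG : F t₀ = G t₀ := by
    simp [hF, hG, Real.cos_zero]
    ring
  constructor
  · intro x hx y hy hxy
    rw [hh x, hh y]
    by_cases hyle : y ≤ t₀
    · have hxle : x ≤ t₀ := le_trans hxy hyle
      simp only [hxle, hyle, if_true]
      exact (div_le_div_iff_of_pos_right hβ2).mpr (hAF ⟨hx.1, hxle⟩ ⟨hy.1, hyle⟩ hxy)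
    · by_cases hxle : x ≤ t₀
      · simp only [hxle, hyle, if_true, if_false]
        have h1 : G y ≤ G t₀ := hAG ⟨le_refl t₀, ht₀a.le⟩
          ⟨(not_le.mp hyle).le, hy.2⟩ (not_le.mp hyle).le
        have h2 : F t₀ ≤ F x := hAF ⟨hx.1, hxle⟩ ⟨ht₀0.le, le_refl t₀⟩ hxle
        refine (div_le_div_iff_of_pos_right hβ2).mpr ?_
        show G y ≤ F x
        linarith [hFG]
      · simp only [hxle, hyle, if_false]
        exact (div_le_div_iff_of_pos_right hβ2).mpr (hAG ⟨(not_le.mp hxle).le, hx.2⟩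
          ⟨(not_le.mp hyle).le, hy.2⟩ hxy)
  · rw [hh 0, if_pos ht₀0.le, mul_div_cancel₀ _ (ne_of_gt hβ2)]
    simp only [sub_zero]
    have h1 : 0 ≤ Real.cos (β * a) :=
      Real.cos_nonneg_of_mem_Icc ⟨by nlinarith, by nlinarith⟩
    have h2 : Real.cos (β * t₀) ≤ 1 := Real.cos_le_one _
    linarith
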